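/- arXiv:1105.4953 — 2 statements merged into one kernel-verified Lean document; each statement's English description precedes it below -/
import Mathlib

section
/- Let S be a finite set of sites in Euclidean space E and R ⊆ S with |R| > 1. Then the Voronoi cell V(R) (the set of points equidistant to all sites of R and strictly closer to R than to S∖R) is contained in the boundary of the Voronoi slab of each r ∈ R, i.e. V(R) ⊆ ∂{x : |x - r| ≤ |x - s| ∀ s ∈ S} for each r ∈ R. -/
open RealInnerProductSpace in

theorem voronoi_cell_subset_slab_boundary
    {d : ℕ} (S R : Finset (EuclideanSpace ℝ (Fin d))) (hRS : R ⊆ S)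
    (hR : 1 < R.card) (r : EuclideanSpace ℝ (Fin d)) (hr : r ∈ R) :
    {x : EuclideanSpace ℝ (Fin d) |
        (∀ a ∈ R, ∀ b ∈ R, dist x a = dist x b) ∧
        ∀ a ∈ R, ∀ s ∈ S, s ∉ R → dist x a < dist x s} ⊆
      frontier {x : EuclideanSpace ℝ (Fin d) | ∀ s ∈ S, dist x r ≤ dist x s} := by
  intro x hx
  obtain ⟨heq, hlt⟩ := hx
  obtain ⟨r', hr', hne⟩ := Finset.exists_mem_ne hR r
  set T : Set (EuclideanSpace ℝ (Fin d)) :=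
    {x : EuclideanSpace ℝ (Fin d) | ∀ s ∈ S, dist x r ≤ dist x s} with hT
  have hxT : x ∈ T := by
    intro s hs
    by_cases hsR : s ∈ R
    · exact le_of_eq (heq r hr s hsR)
    · exact le_of_lt (hlt r hr s hs hsR)
  rw [frontier_eq_closure_inter_closure]
  refine ⟨subset_closure hxT, ?_⟩
  -- points x + t • (r' - r) with t > 0 are strictly closer to r' than to r
  have key : ∀ t : ℝ, 0 < t → x + t • (r' - r) ∉ T := by
    intro t ht hmem
    have h1 := hmem r' (hRS hr')
    set y := x + t • (r' - r) with hy
    have hd : dist x r = dist x r' := heq r hr r' hr'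
    have hsq : ‖y - r‖ ^ 2 - ‖y - r'‖ ^ 2 = 2 * t * ‖r' - r‖ ^ 2 := by
      have e1 : y - r = (x - r) + t • (r' - r) := by rw [hy]; abel
      have e2 : y - r' = (x - r') + t • (r' - r) := by rw [hy]; abel
      have hn : ‖x - r‖ = ‖x - r'‖ := by
        rw [← dist_eq_norm, ← dist_eq_norm, hd]
      rw [e1, e2, norm_add_sq_real, norm_add_sq_real, hn,
        real_inner_smul_right, real_inner_smul_right]
      have : (inner ℝ (x - r) (r' - r) : ℝ) - (inner ℝ (x - r') (r' - r) : ℝ) = ‖r' - r‖ ^ 2 := by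
        rw [← inner_sub_left]
        have : (x - r) - (x - r') = r' - r := by abel
        rw [this, real_inner_self_eq_norm_sq]
      nlinarith [this]
    have hpos : 0 < ‖r' - r‖ ^ 2 := by
      exact pow_pos (norm_pos_iff.mpr (sub_ne_zero.mpr hne)) 2
    have hlt2 : ‖y - r'‖ ^ 2 < ‖y - r‖ ^ 2 := by nlinarith
    have : dist y r' < dist y r := by
      rw [dist_eq_norm, dist_eq_norm]
      exact lt_of_pow_lt_pow_left₀ 2 (norm_nonneg _) hlt2
    exact absurd h1 (not_le.mpr this)
  rw [mem_closure_iff_seq_limit]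
  refine ⟨fun n => x + (1 / (n + 1) : ℝ) • (r' - r), fun n => key _ (by positivity), ?_⟩
  have h0 : Filter.Tendsto (fun n : ℕ => ((1 / (n + 1) : ℝ)) • (r' - r))
      Filter.atTop (nhds ((0 : ℝ) • (r' - r))) :=
    tendsto_one_div_add_atTop_nhds_zero_nat.smul_const _
  simpa using tendsto_const_nhds.add h0
end

section
/- Let S be a nonempty finite set of sites in Euclidean space E, x ∈ E∖S, s ∈ S with x ≠ s. If there exists y ∈ V_S({s}) with |y - x| ≤ |y - s| (i.e. V_S({s}) ∩ H(x,s) ≠ ∅), then the bisector cell V_{S∪{x}}({x,s}) is nonempty: there exists a point equidistant from x and s and strictly closer to both than to any other site of S ∪ {x}. -/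
theorem halfspace_meets_implies_bisector_cell_nonempty
    {d : ℕ} (S : Finset (EuclideanSpace ℝ (Fin d))) (hS : S.Nonempty)
    (x s : EuclideanSpace ℝ (Fin d)) (hx : x ∉ S) (hs : s ∈ S) (hxs : x ≠ s)
    (y : EuclideanSpace ℝ (Fin d))
    (hy : ∀ t ∈ S, t ≠ s → dist y s < dist y t)
    (hyH : dist y x ≤ dist y s) :
    ∃ z : EuclideanSpace ℝ (Fin d),
      dist z x = dist z s ∧ ∀ t ∈ S, t ≠ s → dist z s < dist z t := by
  set f : ℝ → EuclideanSpace ℝ (Fin d) := fun c => AffineMap.lineMap y s c with hf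
  set g : ℝ → ℝ := fun c => dist (f c) x - dist (f c) s with hg
  have hcont : ContinuousOn g (Set.Icc (0:ℝ) 1) := by
    have hfc : Continuous f := AffineMap.lineMap_continuous
    exact ((hfc.dist continuous_const).sub (hfc.dist continuous_const)).continuousOn
  have hg0 : g 0 ≤ 0 := by
    simp [hg, hf, AffineMap.lineMap_apply_zero]
    linarith
  have hg1 : 0 ≤ g 1 := by
    simp [hg, hf, AffineMap.lineMap_apply_one]
    try exact le_of_lt (dist_pos.2 (fun h => hxs h.symm))
  obtain ⟨c, hc, hgc⟩ : ∃ c ∈ Set.Icc (0:ℝ) 1, g c = 0 := by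
    rcases intermediate_value_Icc (by norm_num : (0:ℝ) ≤ 1) hcont
      ⟨hg0, hg1⟩ with ⟨c, hc, hgc⟩
    exact ⟨c, hc, hgc⟩
  obtain ⟨hc0, hc1⟩ := hc
  refine ⟨f c, by have := hgc; simp [hg] at this; linarith, ?_⟩
  intro t ht hts
  have hdy : dist (f c) y = c * dist y s := by
    show dist (AffineMap.lineMap y s c) y = _
    rw [dist_lineMap_left, Real.norm_eq_abs, abs_of_nonneg hc0]
  have hds : dist (f c) s = (1 - c) * dist y s := by
    show dist (AffineMap.lineMap y s c) s = _
    rw [dist_lineMap_right, Real.norm_eq_abs, abs_of_nonneg (by linarith : (0:ℝ) ≤ 1 - c)]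
  have htri : dist y t ≤ dist y (f c) + dist (f c) t := dist_triangle _ _ _
  have hyt := hy t ht hts
  rw [dist_comm y (f c), hdy] at htri
  nlinarith [dist_nonneg (x := y) (y := s)]
end
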